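/- For every integer l ≥ 0, every real λ > 0 and every α ∈ ℂ with Re(α) > −1, the function t ↦ e^{−λt} t^α (log t)^l is integrable on (0, ∞), and ∫₀^∞ e^{−λt} t^α (log t)^l dt equals the l-th complex derivative at a = α of the function a ↦ Γ(a + 1) · λ^{−a−1} (holomorphic for Re(a) > −1), where t^a = exp(a · log t), λ^{−a−1} = exp(−(a+1) · log λ), log is the real logarithm, and Γ is the Gamma function. -/

import Mathlib

open MeasureTheory Set Filter Asymptotics Topology

noncomputable def fkl (lam : ℝ) (k : ℕ) : ℝ → ℂ :=
  fun t => ((Real.log t : ℂ)) ^ k * Complex.exp (-(lam : ℂ) * t)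

lemma fkl_succ (lam : ℝ) (k : ℕ) :
    (fun t : ℝ => (Real.log t) • fkl lam k t) = fkl lam (k + 1) := by
  funext t
  simp only [fkl, Complex.real_smul, pow_succ]
  ring

lemma fkl_locInt (lam : ℝ) (k : ℕ) : LocallyIntegrableOn (fkl lam k) (Ioi 0) := by
  apply ContinuousOn.locallyIntegrableOn _ measurableSet_Ioi
  apply ContinuousOn.mul
  · exact ((Complex.continuous_ofReal.comp_continuousOn
      (Real.continuousOn_log.mono fun t ht => ne_of_gt ht)).pow k)
  · exact (Complex.continuous_exp.comp (by continuity)).continuousOn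

lemma fkl_top (lam : ℝ) (hlam : 0 < lam) (k : ℕ) (a : ℝ) :
    fkl lam k =O[atTop] (· ^ (-a)) := by
  induction k generalizing a with
  | zero =>
    have h1 : (fun t : ℝ => Complex.exp (-(lam : ℂ) * t)) =O[atTop]
        fun t => Real.exp (-lam * t) := by
      apply IsBigO.of_bound 1
      filter_upwards with t
      simp [Complex.norm_exp]
    have e : fkl lam 0 = fun t : ℝ => Complex.exp (-(lam : ℂ) * t) := by
      funext t; simp only [fkl, pow_zero, one_mul]
    rw [e]
    exact h1.trans (isLittleO_exp_neg_mul_rpow_atTop hlam (-a)).isBigO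
  | succ k ih =>
    rw [← fkl_succ]
    exact isBigO_rpow_top_log_smul (lt_add_one a) (ih (a + 1))
lemma fkl_bot (lam : ℝ) (hlam : 0 < lam) (k : ℕ) (b : ℝ) (hb : 0 < b) :
    fkl lam k =O[𝓝[>] (0:ℝ)] (· ^ (-b)) := by
  induction k generalizing b with
  | zero =>
    apply IsBigO.of_bound 1
    filter_upwards [Ioo_mem_nhdsGT_of_mem (by norm_num : (0:ℝ) ∈ Ico 0 1)] with t ht
    have ht0 : 0 < t := ht.1
    have h1 : ‖fkl lam 0 t‖ ≤ 1 := by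
      simp only [fkl, pow_zero, one_mul, Complex.norm_exp]
      rw [Real.exp_le_one_iff]
      have : (-(lam:ℂ) * t).re = -(lam * t) := by simp
      rw [this]
      nlinarith
    have h2 : (1:ℝ) ≤ t ^ (-b) := by
      rw [Real.rpow_neg ht0.le]
      rw [le_inv_comm₀ one_pos (Real.rpow_pos_of_pos ht0 b)]
      simpa using Real.rpow_le_one ht0.le ht.2.le hb.le
    calc ‖fkl lam 0 t‖ ≤ 1 := h1
      _ ≤ t ^ (-b) := h2
      _ ≤ 1 * ‖t ^ (-b)‖ := by rw [one_mul]; exact le_abs_self _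
  | succ k ih =>
    rw [← fkl_succ]
    exact isBigO_rpow_zero_log_smul (half_lt_self hb) (ih (b/2) (half_pos hb))

lemma fkl_key (lam : ℝ) (hlam : 0 < lam) (k : ℕ) {s : ℂ} (hs : 0 < s.re) :
    MellinConvergent (fkl lam k) s ∧
      HasDerivAt (mellin (fkl lam k)) (mellin (fkl lam (k+1)) s) s := by
  have h := mellin_hasDerivAt_of_isBigO_rpow (fkl_locInt lam k)
    (fkl_top lam hlam k (s.re + 1)) (lt_add_one _)
    (fkl_bot lam hlam k (s.re / 2) (half_pos hs)) (half_lt_self hs)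
  rw [fkl_succ] at h
  refine ⟨?_, h.2⟩
  exact mellinConvergent_of_isBigO_rpow (fkl_locInt lam k)
    (fkl_top lam hlam k (s.re + 1)) (lt_add_one _)
    (fkl_bot lam hlam k (s.re / 2) (half_pos hs)) (half_lt_self hs)

lemma fkl_mellin_zero (lam : ℝ) (hlam : 0 < lam) {s : ℂ} (hs : 0 < s.re) :
    mellin (fkl lam 0) s = Complex.Gamma s * (lam : ℂ) ^ (-s) := by
  have h0 : fkl lam 0 = fun t : ℝ => ((Real.exp (-(lam * t)) : ℝ) : ℂ) := by
    funext t
    simp only [fkl, pow_zero, one_mul, Complex.ofReal_exp]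
    push_cast
    ring_nf
  rw [h0]
  have h1 := mellin_comp_mul_left (fun x : ℝ => ((Real.exp (-x) : ℝ) : ℂ)) s hlam
  have h2 : mellin (fun x : ℝ => ((Real.exp (-x) : ℝ) : ℂ)) s = Complex.Gamma s := by
    rw [← Complex.GammaIntegral_eq_mellin, ← Complex.Gamma_eq_integral hs]
  calc mellin (fun t : ℝ => ((Real.exp (-(lam * t)) : ℝ) : ℂ)) s
      = (lam : ℂ) ^ (-s) • mellin (fun x : ℝ => ((Real.exp (-x) : ℝ) : ℂ)) s := h1
    _ = Complex.Gamma s * (lam : ℂ) ^ (-s) := by rw [h2, smul_eq_mul, mul_comm]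

noncomputable def Hfun (lam : ℝ) (k : ℕ) : ℂ → ℂ := fun a => mellin (fkl lam k) (a + 1)

lemma Hfun_hasDeriv (lam : ℝ) (hlam : 0 < lam) (k : ℕ) {a : ℂ} (ha : -1 < a.re) :
    HasDerivAt (Hfun lam k) (Hfun lam (k+1) a) a := by
  have hs : 0 < (a + 1).re := by simp [Complex.add_re]; linarith
  have h := (fkl_key lam hlam k hs).2
  have h2 : HasDerivAt (fun z : ℂ => z + 1) 1 a := (hasDerivAt_id a).add_const 1
  have h3 := h.comp a h2
  rw [mul_one] at h3
  exact h3

lemma Hfun_iter (lam : ℝ) (hlam : 0 < lam) (l k : ℕ) {a : ℂ} (ha : -1 < a.re) :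
    iteratedDeriv l (Hfun lam k) a = Hfun lam (k + l) a := by
  induction l generalizing k a with
  | zero => simp
  | succ l ih =>
    rw [iteratedDeriv_succ']
    have hopen : IsOpen {z : ℂ | -1 < z.re} := isOpen_lt continuous_const Complex.continuous_re
    have hev : deriv (Hfun lam k) =ᶠ[𝓝 a] Hfun lam (k+1) := by
      filter_upwards [hopen.mem_nhds ha] with z hz
      exact (Hfun_hasDeriv lam hlam k hz).deriv
    rw [hev.iteratedDeriv_eq l, ih (k+1) ha]
    congr 1
    omega

theorem statement9 (l : ℕ) (lam : ℝ) (hlam : 0 < lam) (α : ℂ) (hα : -1 < α.re) :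
    MeasureTheory.IntegrableOn
      (fun t : ℝ =>
        Complex.exp (-(lam : ℂ) * (t : ℂ)) * (t : ℂ) ^ α * ((Real.log t : ℂ)) ^ l)
      (Set.Ioi 0) ∧
    (∫ t in Set.Ioi (0 : ℝ),
        Complex.exp (-(lam : ℂ) * (t : ℂ)) * (t : ℂ) ^ α * ((Real.log t : ℂ)) ^ l) =
      iteratedDeriv l (fun a : ℂ => Complex.Gamma (a + 1) * (lam : ℂ) ^ (-(a + 1))) α := by
  have hs : 0 < (α + 1).re := by simp [Complex.add_re]; linarith
  have hfun : (fun t : ℝ => (t : ℂ) ^ ((α + 1) - 1) • fkl lam l t) =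
      fun t : ℝ =>
        Complex.exp (-(lam : ℂ) * (t : ℂ)) * (t : ℂ) ^ α * ((Real.log t : ℂ)) ^ l := by
    funext t
    simp only [fkl, add_sub_cancel_right, smul_eq_mul]
    ring
  constructor
  · have h := (fkl_key lam hlam l hs).1
    rw [MellinConvergent, hfun] at h
    exact h
  · have hev : (fun a : ℂ => Complex.Gamma (a + 1) * (lam : ℂ) ^ (-(a + 1))) =ᶠ[𝓝 α]
        Hfun lam 0 := by
      have hopen : IsOpen {z : ℂ | -1 < z.re} := isOpen_lt continuous_const Complex.continuous_re
      filter_upwards [hopen.mem_nhds hα] with z hz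
      have : 0 < (z + 1).re := by simp [Complex.add_re]; exact by linarith [hz]
      rw [Hfun, fkl_mellin_zero lam hlam this]
    rw [hev.iteratedDeriv_eq l, Hfun_iter lam hlam l 0 hα]
    simp only [Hfun, Nat.zero_add, mellin, hfun]
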